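/- Let v_1, ..., v_k be unit vectors in ℂ^d that are equiangular with common angle β, and suppose β < 1 (i.e. the vectors are pairwise non-parallel). Then the rank-one orthogonal projections v_1v_1*, ..., v_kv_k* are linearly independent in M_d(ℂ). -/

import Mathlib

open Matrix

private theorem expand_aux {d k : ℕ} (v : Fin k → (Fin d → ℂ)) (g : Fin k → ℂ) (j : Fin k) :
    star (v j) ⬝ᵥ ((∑ i, g i • Matrix.vecMulVec (v i) (star (v i))) *ᵥ v j)
      = ∑ i, g i * ((star (v j) ⬝ᵥ v i) * (star (v i) ⬝ᵥ v j)) := by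
  simp only [Matrix.mulVec, Matrix.vecMulVec_apply, dotProduct, Finset.mul_sum,
    Finset.sum_mul, Matrix.sum_apply, Matrix.smul_apply, smul_eq_mul, Pi.star_apply]
  rw [Finset.sum_congr rfl fun x _ => Finset.sum_comm, Finset.sum_comm]
  refine Finset.sum_congr rfl fun i _ => ?_
  rw [Finset.sum_comm]
  exact Finset.sum_congr rfl fun a _ => Finset.sum_congr rfl fun b _ => by ring

/-- Equiangular unit vectors in ℂ^d with common angle β < 1 yield
linearly independent rank-one projections v_i v_i*. -/
theorem equiangular_lines_proj_linearIndependent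
    {d k : ℕ} (v : Fin k → (Fin d → ℂ)) (β : ℝ)
    (hunit : ∀ i, (star (v i)) ⬝ᵥ v i = 1)
    (hang : ∀ i j, i ≠ j → ‖(star (v i)) ⬝ᵥ v j‖ = β)
    (hβ : β < 1) :
    LinearIndependent ℂ (fun i => Matrix.vecMulVec (v i) (star (v i))) := by
  classical
  rw [Fintype.linearIndependent_iff]
  intro g hg
  have key : ∀ j : Fin k, g j + (β:ℂ)^2 * (∑ i, g i - g j) = 0 := by
    intro j
    have h0 := congrArg (fun M => star (v j) ⬝ᵥ (M *ᵥ v j)) hg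
    simp only [Matrix.zero_mulVec, dotProduct_zero] at h0
    rw [expand_aux] at h0
    have hterm : ∀ i : Fin k, (star (v j) ⬝ᵥ v i) * (star (v i) ⬝ᵥ v j)
        = if i = j then (1:ℂ) else (β:ℂ)^2 := by
      intro i
      by_cases hij : i = j
      · subst hij; rw [hunit]; simp
      · rw [if_neg hij, star_dotProduct]
        set a := star (v i) ⬝ᵥ v j with ha
        have h1 : star a * a = (Complex.normSq a : ℂ) := by
          rw [Complex.normSq_eq_conj_mul_self]; rfl
        rw [h1, ← Complex.sq_norm, hang i j hij]
        push_cast; ring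
    rw [Finset.sum_congr rfl (fun i _ => by rw [hterm i])] at h0
    have hsplit : ∀ i : Fin k, g i * (if i = j then (1:ℂ) else (β:ℂ)^2)
        = g i * (β:ℂ)^2 + (if i = j then g i * (1 - (β:ℂ)^2) else 0) := by
      intro i
      by_cases h : i = j
      · simp [h]; ring
      · simp [h]
    rw [Finset.sum_congr rfl (fun i _ => hsplit i), Finset.sum_add_distrib,
      Finset.sum_ite_eq' Finset.univ j (fun i => g i * (1 - (β:ℂ)^2))] at h0
    simp only [Finset.mem_univ, if_true, ← Finset.sum_mul] at h0
    linear_combination h0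
  intro j
  by_cases hk1 : k ≤ 1
  · have hall : ∀ i : Fin k, i = j := fun i => Fin.ext (by omega)
    have hs : ∑ i, g i = g j := by
      have hk : k = 1 := by have := j.isLt; omega
      rw [Finset.sum_congr rfl fun i _ => congrArg g (hall i), Finset.sum_const,
        Finset.card_univ, Fintype.card_fin, hk, one_smul]
    have hj := key j
    rw [hs] at hj
    simpa using hj
  · push_neg at hk1
    have hβ0 : 0 ≤ β := by
      have hne : (⟨0, by omega⟩ : Fin k) ≠ ⟨1, by omega⟩ := by
        intro h; simp [Fin.ext_iff] at h
      rw [← hang _ _ hne]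
      exact norm_nonneg _
    have hk2 : (2:ℝ) ≤ (k:ℝ) := by exact_mod_cast hk1
    have h : ∑ j : Fin k, (g j + (β:ℂ)^2 * (∑ i, g i - g j)) = 0 :=
      Finset.sum_eq_zero fun j _ => key j
    rw [Finset.sum_add_distrib, ← Finset.mul_sum, Finset.sum_sub_distrib,
      Finset.sum_const, Finset.card_univ, Fintype.card_fin, nsmul_eq_mul] at h
    have hsum : (∑ i, g i) * (1 + ((k:ℂ) - 1) * (β:ℂ)^2) = 0 := by linear_combination h
    have hc : (1 + ((k:ℂ) - 1) * (β:ℂ)^2) = ((1 + ((k:ℝ) - 1) * β^2 : ℝ) : ℂ) := by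
      push_cast; ring
    have hS : (∑ i, g i) = 0 := by
      rcases mul_eq_zero.mp hsum with h' | h'
      · exact h'
      · exfalso
        rw [hc] at h'
        have := Complex.ofReal_eq_zero.mp h'
        nlinarith [sq_nonneg β]
    have hj := key j
    rw [hS] at hj
    have h1 : g j * (1 - (β:ℂ)^2) = 0 := by linear_combination hj
    rcases mul_eq_zero.mp h1 with h' | h'
    · exact h'
    · exfalso
      have hc2 : (1 - (β:ℂ)^2) = ((1 - β^2 : ℝ) : ℂ) := by push_cast; ring
      rw [hc2] at h'
      have := Complex.ofReal_eq_zero.mp h'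
      nlinarith
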